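/- In the same setting as the overlapping-groups construction (groups $A$, $B$ with $|A\setminus B|=|B\setminus A|=4n$ all labeled $+$ and $-$ respectively, and $|A\cap B|=2n$ with $n$ positives and $n$ negatives), there exist classifiers $f_A$ and $f_B$ such that $\mathrm{err}_{f_A}(A) = 1/18$ and $\mathrm{err}_{f_B}(B) = 1/18$, where $\mathrm{err}_f(g)$ denotes the unweighted average of false positive and false negative rates of $f$ on group $g$. Specifically, $f_A$ predicts $+$ on $A\setminus B$ and $-$ elsewhere, and $f_B$ predicts $+$ on $A\cap B$ and $-$ elsewhere. -/
import Mathlib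


open Finset

/-- Unweighted average of false positive and false negative rates of classifier `h`
on group `g` (labels: `true` = `+`, `false` = `-`). -/
noncomputable def errRate {X : Type*} [DecidableEq X]
    (label h : X → Bool) (g : Finset X) : ℝ :=
  (((g.filter (fun x => label x = true ∧ h x = false)).card : ℝ) /
      ((g.filter (fun x => label x = true)).card : ℝ) +
    ((g.filter (fun x => label x = false ∧ h x = true)).card : ℝ) /
      ((g.filter (fun x => label x = false)).card : ℝ)) / 2

theorem stmt1 (m : ℕ) (hm : 1 ≤ m) (X : Type*) [DecidableEq X] [Fintype X]
    (A B : Finset X) (label : X → Bool)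
    (hAB : (A \ B).card = 8 * m)
    (hBA : (B \ A).card = 8 * m)
    (hI : (A ∩ B).card = 2 * m)
    (hlabA : ∀ x ∈ A \ B, label x = true)
    (hlabB : ∀ x ∈ B \ A, label x = false)
    (hIpos : ((A ∩ B).filter (fun x => label x = true)).card = m) :
    ∃ fA fB : X → Bool,
      (∀ x, fA x = true ↔ x ∈ A \ B) ∧
      (∀ x, fB x = true ↔ x ∈ A ∩ B) ∧
      errRate label fA A = 1 / 18 ∧
      errRate label fB B = 1 / 18 := by
  classical
  refine ⟨fun x => decide (x ∈ A \ B), fun x => decide (x ∈ A ∩ B),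
    fun x => by simp, fun x => by simp, ?_, ?_⟩
  · -- errRate for fA on A
    have hA : A = (A \ B) ∪ (A ∩ B) := (sdiff_union_inter A B).symm
    have hdisj : Disjoint (A \ B) (A ∩ B) := disjoint_sdiff_inter A B
    have hnotmem : ∀ x ∈ A ∩ B, x ∉ A \ B := fun x hx hx' =>
      (mem_sdiff.mp hx').2 (mem_inter.mp hx).2
    have hpos : (A.filter (fun x => label x = true)).card = 9 * m := by
      rw [hA, filter_union, card_union_of_disjoint (disjoint_filter_filter hdisj),
        filter_true_of_mem hlabA, hAB, hIpos]
      ring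
    have hneg : (A.filter (fun x => label x = false)).card = m := by
      have h1 : ((A \ B).filter (fun x => label x = false)) = ∅ := by
        rw [filter_eq_empty_iff]
        intro x hx
        simp [hlabA x hx]
      have h2 : ((A ∩ B).filter (fun x => label x = false)).card = m := by
        have := card_filter_add_card_filter_not
          (s := A ∩ B) (p := fun x => label x = true)
        simp only [hIpos, hI] at this
        have h2' : ((A ∩ B).filter (fun x => ¬ label x = true))
            = ((A ∩ B).filter (fun x => label x = false)) := by
          apply filter_congr; intro x _; simp
        rw [h2'] at this; omega
      rw [hA, filter_union, card_union_of_disjoint (disjoint_filter_filter hdisj),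
        h1, h2]
      simp
    have hFN : (A.filter (fun x => label x = true ∧ decide (x ∈ A \ B) = false)).card
        = m := by
      have he : (A.filter (fun x => label x = true ∧ decide (x ∈ A \ B) = false))
          = ((A ∩ B).filter (fun x => label x = true)) := by
        ext x
        simp only [mem_filter, mem_inter, mem_sdiff, decide_eq_false_iff_not]
        tauto
      rw [he, hIpos]
    have hFP : (A.filter (fun x => label x = false ∧ decide (x ∈ A \ B) = true)).card
        = 0 := by
      rw [card_eq_zero, filter_eq_empty_iff]
      intro x hx
      by_cases h : x ∈ A \ B
      · simp [hlabA x h]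
      · simp [h]
    rw [errRate, hpos, hneg, hFN, hFP]
    have hm' : (m : ℝ) ≠ 0 := Nat.cast_ne_zero.mpr (by omega)
    push_cast
    field_simp
    ring
  · -- errRate for fB on B
    have hB : B = (B \ A) ∪ (A ∩ B) := by
      rw [inter_comm]; exact (sdiff_union_inter B A).symm
    have hdisj : Disjoint (B \ A) (A ∩ B) := by
      rw [inter_comm]; exact disjoint_sdiff_inter B A
    have hmemI : ∀ x ∈ B \ A, x ∉ A ∩ B := fun x hx hx' =>
      (mem_sdiff.mp hx).2 (mem_inter.mp hx').1
    have hpos : (B.filter (fun x => label x = true)).card = m := by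
      have h1 : ((B \ A).filter (fun x => label x = true)) = ∅ := by
        rw [filter_eq_empty_iff]; intro x hx; simp [hlabB x hx]
      rw [hB, filter_union, card_union_of_disjoint (disjoint_filter_filter hdisj),
        h1, hIpos]
      simp
    have hneg : (B.filter (fun x => label x = false)).card = 9 * m := by
      have h1 : ((B \ A).filter (fun x => label x = false)) = B \ A :=
        filter_true_of_mem hlabB
      have h2 : ((A ∩ B).filter (fun x => label x = false)).card = m := by
        have := card_filter_add_card_filter_not
          (s := A ∩ B) (p := fun x => label x = true)
        simp only [hIpos, hI] at this
        have h2' : ((A ∩ B).filter (fun x => ¬ label x = true))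
            = ((A ∩ B).filter (fun x => label x = false)) := by
          apply filter_congr; intro x _; simp
        rw [h2'] at this; omega
      rw [hB, filter_union, card_union_of_disjoint (disjoint_filter_filter hdisj),
        h1, h2, hBA]
      ring
    have hFN : (B.filter (fun x => label x = true ∧ decide (x ∈ A ∩ B) = false)).card
        = 0 := by
      rw [card_eq_zero, filter_eq_empty_iff]
      intro x hx
      by_cases h : x ∈ A ∩ B
      · simp [h]
      · have hx' : x ∈ B \ A :=
          mem_sdiff.mpr ⟨hx, fun hA' => h (mem_inter.mpr ⟨hA', hx⟩)⟩
        simp [hlabB x hx']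
    have hFP : (B.filter (fun x => label x = false ∧ decide (x ∈ A ∩ B) = true)).card
        = m := by
      have he : (B.filter (fun x => label x = false ∧ decide (x ∈ A ∩ B) = true))
          = ((A ∩ B).filter (fun x => label x = false)) := by
        ext x
        simp only [mem_filter, mem_inter, decide_eq_true_eq]
        tauto
      have h3 : ((A ∩ B).filter (fun x => label x = false)).card = m := by
        have := card_filter_add_card_filter_not
          (s := A ∩ B) (p := fun x => label x = true)
        simp only [hIpos, hI] at this
        have h2' : ((A ∩ B).filter (fun x => ¬ label x = true))
            = ((A ∩ B).filter (fun x => label x = false)) := by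
          apply filter_congr; intro x _; simp
        rw [h2'] at this; omega
      rw [he, h3]
    rw [errRate, hpos, hneg, hFN, hFP]
    have hm' : (m : ℝ) ≠ 0 := Nat.cast_ne_zero.mpr (by omega)
    push_cast
    field_simp
    ring
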